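/- Let C ⊆ F_q^n be a code with |C| = q^k ≥ 2 and minimum distance d, and suppose the minimum-distance graph G(C) has exactly Q connected components. Then for every function f : F_q^k → S with |Im(f)| ≥ Q + 1, every bijection u ↦ c_u from F_q^k onto C, and every d_f > d, there exist u, v ∈ F_q^k with f(u) ≠ f(v) and d(c_u, c_v) < d_f; that is, C cannot serve as an (f : d, d_f)-FCC with d_f > d. -/

import Mathlib

/-- The minimum distance of a code `C ⊆ F^n`. -/
noncomputable def minDist {F : Type*} [Fintype F] [DecidableEq F] {n : ℕ}
    (C : Set (Fin n → F)) : ℕ :=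
  sInf {d : ℕ | ∃ x ∈ C, ∃ y ∈ C, x ≠ y ∧ hammingDist x y = d}

/-- The minimum-distance graph `G(C)`. -/
noncomputable def mdGraph {F : Type*} [Fintype F] [DecidableEq F] {n : ℕ}
    (C : Set (Fin n → F)) : SimpleGraph C where
  Adj x y := x ≠ y ∧ hammingDist (x : Fin n → F) (y : Fin n → F) = minDist C
  symm := by
    constructor
    rintro x y ⟨hxy, hd⟩
    exact ⟨hxy.symm, by rwa [hammingDist_comm]⟩
  loopless := by
    constructor
    rintro x ⟨hxx, -⟩
    exact hxx rfl

/-- If the minimum-distance graph of a code `C` with `|C| = q^k ≥ 2` and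
minimum distance `d` has exactly `Q` connected components, then `C` cannot serve as a strict
`(f : d, d_f)`-FCC for any `f` with `|Im(f)| ≥ Q + 1` and `d_f > d`. -/
theorem mdGraph_components_no_strict_FCC
    {F S : Type*} [Field F] [Fintype F] [DecidableEq F]
    {n k d Q : ℕ} (C : Set (Fin n → F))
    (hcard : Nat.card C = Fintype.card F ^ k) (h2 : 2 ≤ Nat.card C)
    (hmin : minDist C = d)
    (hQ : Nat.card (mdGraph C).ConnectedComponent = Q)
    (f : (Fin k → F) → S) (hf : Q + 1 ≤ Nat.card (Set.range f))
    (cenc : (Fin k → F) → (Fin n → F)) (hinj : Function.Injective cenc)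
    (hsurj : Set.range cenc = C)
    (df : ℕ) (hdf : d < df) :
    ∃ u v : Fin k → F, f u ≠ f v ∧ hammingDist (cenc u) (cenc v) < df := by
  by_contra hcon
  push_neg at hcon
  -- bijection from messages to the code
  let e : (Fin k → F) ≃ C := (Equiv.ofInjective cenc hinj).trans (Equiv.setCongr hsurj)
  have he : ∀ u, (e u : Fin n → F) = cenc u := fun u => rfl
  have hesymm : ∀ x : C, cenc (e.symm x) = (x : Fin n → F) := by
    intro x
    have := he (e.symm x)
    rw [e.apply_symm_apply] at this
    exact this.symm
  let g : C → S := f ∘ e.symm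
  have hadj : ∀ x y : C, (mdGraph C).Adj x y → g x = g y := by
    rintro x y ⟨hxy, hd⟩
    have hlt : hammingDist (cenc (e.symm x)) (cenc (e.symm y)) < df := by
      rw [hesymm, hesymm, hd, hmin]; exact hdf
    by_contra hne
    exact absurd (hcon _ _ hne) (not_le.mpr hlt)
  have hwalk : ∀ (v w : C) (p : (mdGraph C).Walk v w), g v = g w := by
    intro v w p
    induction p with
    | nil => rfl
    | cons h _ ih => exact (hadj _ _ h).trans ih
  let G : (mdGraph C).ConnectedComponent → S :=
    SimpleGraph.ConnectedComponent.lift g (fun v w p _ => hwalk v w p)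
  have hrange : Set.range f ⊆ Set.range G := by
    rintro s ⟨u, rfl⟩
    refine ⟨(mdGraph C).connectedComponentMk (e u), ?_⟩
    show g (e u) = f u
    simp [g]
  have hC : Finite C := Set.toFinite C
  have hfin : Finite (mdGraph C).ConnectedComponent := Quot.finite _
  have hle : Nat.card (Set.range f) ≤ Q := by
    calc Nat.card (Set.range f) ≤ Nat.card (Set.range G) :=
          Nat.card_mono (Set.toFinite _) hrange
      _ ≤ Nat.card (mdGraph C).ConnectedComponent :=
          Nat.card_le_card_of_surjective (Set.rangeFactorization G)
            Set.rangeFactorization_surjective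
      _ = Q := hQ
  omega
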